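/- Let w be a control function (w(s,t) ≥ 0, continuous, superadditive: w(s,u) + w(u,t) ≤ w(s,t) for s ≤ u ≤ t, and w(s,s) = 0). Let p, q > 0 with θ := 1/p + 1/q > 1. Let φ be a function of two intervals such that |φ([u,u']×[v,v'])| ≤ C w(u,u')^{1/p} w(v,v')^{1/q} for all partition points u < u', v < v' of a partition s = t_0 < t_1 < ... < t_m = t. Then |∑_{i=1}^m φ([s,t_{i-1}]×[t_{i-1},t_i])| ≤ C ζ(θ) w(s,t)^θ, where ζ is the Riemann zeta function. -/

import Mathlib

open Finset


/-- Removing one point from a partition changes a sum of interval terms by a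
single correction term. -/
theorem sum_point_removal (g g' : ℕ → ℝ) (k r : ℕ)
    (hhead : ∀ j, j < k → g' j = g j)
    (htail : ∀ j, j < r → g' (k + 1 + j) = g (k + 2 + j)) :
    ∑ j ∈ Finset.range (k + 2 + r), g j
      = (∑ j ∈ Finset.range (k + 1 + r), g' j) + (g k + g (k+1) - g' k) := by
  induction r with
  | zero =>
    rw [(by omega : k + 2 + 0 = (k+1)+1), (by omega : k + 1 + 0 = k+1),
      Finset.sum_range_succ, Finset.sum_range_succ, Finset.sum_range_succ]
    have : ∑ j ∈ Finset.range k, g' j = ∑ j ∈ Finset.range k, g j :=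
      Finset.sum_congr rfl fun j hj => hhead j (Finset.mem_range.1 hj)
    rw [this]; ring
  | succ r ih =>
    rw [(by omega : k + 2 + (r+1) = (k+2+r)+1), (by omega : k + 1 + (r+1) = (k+1+r)+1),
      Finset.sum_range_succ, Finset.sum_range_succ,
      ih (fun j hj => htail j (by omega)), htail r (by omega)]
    ring

/-- Auxiliary ℕ-indexed version of the Young maximal inequality, with a
partial zeta sum on the right-hand side. Proved by induction on `m`,
removing one interior partition point at a time. -/
theorem young_aux (p q C : ℝ) (hp : 0 < p) (hq : 0 < q)
    (hθ : 1 < 1/p + 1/q) (hC : 0 ≤ C)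
    (s T : ℝ) (w Φ : ℝ → ℝ → ℝ)
    (hw0 : ∀ a b : ℝ, s ≤ a → a ≤ b → b ≤ T → 0 ≤ w a b)
    (hwsuper : ∀ a b c : ℝ, s ≤ a → a ≤ b → b ≤ c → c ≤ T →
      w a b + w b c ≤ w a c) :
    ∀ m : ℕ, ∀ u : ℕ → ℝ,
      (∀ i j : ℕ, i ≤ j → j ≤ m → u i ≤ u j) → u 0 = s → u m = T →
      (∀ i j k l : ℕ, i ≤ j → j ≤ m → k ≤ l → l ≤ m →
        |Φ (u j) (u l) - Φ (u i) (u l) - Φ (u j) (u k) + Φ (u i) (u k)|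
          ≤ C * (w (u i) (u j)) ^ (1/p) * (w (u k) (u l)) ^ (1/q)) →
      |∑ j ∈ Finset.range m,
          (Φ (u j) (u (j+1)) - Φ s (u (j+1)) - Φ (u j) (u j) + Φ s (u j))|
        ≤ C * (∑ k ∈ Finset.range (m-1), ((k:ℝ)+1) ^ (-(1/p+1/q)))
            * (w s T) ^ (1/p+1/q) := by
  intro m
  induction m with
  | zero =>
    intro u hmono h0 hm hΦ
    simp
  | succ n IH =>
    intro u hmono h0 hm hΦ
    rcases Nat.eq_zero_or_pos n with rfl | hn
    · -- one interval: the single term vanishes since `u 0 = s`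
      rw [Finset.sum_range_one, h0]
      simp
    -- m = n+1 with n ≥ 1 : remove an interior point.
    have hθ0 : (0:ℝ) < 1/p + 1/q := by positivity
    have hsT : s ≤ T := by rw [← h0, ← hm]; exact hmono 0 (n+1) (by omega) le_rfl
    have hus : ∀ i, i ≤ n+1 → s ≤ u i := by
      intro i hi; rw [← h0]; exact hmono 0 i (by omega) hi
    have huT : ∀ i, i ≤ n+1 → u i ≤ T := by
      intro i hi; rw [← hm]; exact hmono i (n+1) hi le_rfl
    have hW : 0 ≤ w s T := hw0 s T le_rfl hsT le_rfl
    -- nonnegativity of adjacent increments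
    have hfnn : ∀ j, j + 1 ≤ n + 1 → 0 ≤ w (u j) (u (j+1)) := by
      intro j hj
      exact hw0 _ _ (hus j (by omega)) (hmono j (j+1) (by omega) hj) (huT _ hj)
    -- chain superadditivity: sums of adjacent increments are controlled
    have chain : ∀ nn c : ℕ, c + nn ≤ n + 1 →
        ∑ j ∈ Finset.range nn, w (u (c+j)) (u (c+j+1)) ≤ w (u c) (u (c+nn)) := by
      intro nn
      induction nn with
      | zero =>
        intro c hc
        simpa using hw0 (u c) (u c) (hus c (by omega)) le_rfl (huT c (by omega))
      | succ k ih =>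
        intro c hc
        rw [Finset.sum_range_succ]
        have h1 : w (u c) (u (c+k)) + w (u (c+k)) (u (c+k+1)) ≤ w (u c) (u (c+(k+1))) := by
          have := hwsuper (u c) (u (c+k)) (u (c+k+1)) (hus c (by omega))
            (hmono c (c+k) (by omega) (by omega))
            (hmono (c+k) (c+k+1) (by omega) (by omega)) (huT (c+k+1) (by omega))
          simpa [Nat.add_assoc] using this
        have h2 := ih c (by omega)
        linarith
    have hsumA : ∑ j ∈ Finset.range (n+1), w (u j) (u (j+1)) ≤ w s T := by
      have := chain (n+1) 0 (by omega)
      simpa [h0, hm] using this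
    have hsumA' : ∑ j ∈ Finset.range n, w (u j) (u (j+1)) ≤ w s T := by
      refine le_trans ?_ hsumA
      refine Finset.sum_le_sum_of_subset_of_nonneg
        (Finset.range_subset_range.2 (by omega)) ?_
      intro i hi _
      exact hfnn i (by simp at hi; omega)
    have hsumB : ∑ j ∈ Finset.range n, w (u (j+1)) (u (j+2)) ≤ w s T := by
      have he : ∑ j ∈ Finset.range (n+1), w (u j) (u (j+1))
          = ∑ j ∈ Finset.range n, w (u (j+1)) (u (j+1+1)) + w (u 0) (u 1) :=
        Finset.sum_range_succ' _ n
      have h0' : 0 ≤ w (u 0) (u 1) := hfnn 0 (by omega)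
      have : ∑ j ∈ Finset.range n, w (u (j+1)) (u (j+1+1)) ≤ w s T := by linarith
      simpa [Nat.add_assoc] using this
    -- weights for the geometric/arithmetic mean
    set α : ℝ := (1/p) / (1/p + 1/q) with hαdef
    set β : ℝ := (1/q) / (1/p + 1/q) with hβdef
    have hα : 0 < α := by positivity
    have hβ : 0 < β := by positivity
    have hαβ : α + β = 1 := by
      rw [hαdef, hβdef, ← add_div, div_self (ne_of_gt hθ0)]
    -- choose an interior point with small weighted increment
    have havg : ∑ j ∈ Finset.range n,
        (α * w (u j) (u (j+1)) + β * w (u (j+1)) (u (j+2)))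
        ≤ ∑ j ∈ Finset.range n, w s T / n := by
      rw [Finset.sum_const, Finset.card_range, nsmul_eq_mul,
        mul_div_cancel₀ _ (by positivity : (n:ℝ) ≠ 0)]
      rw [Finset.sum_add_distrib, ← Finset.mul_sum, ← Finset.mul_sum]
      calc α * (∑ j ∈ Finset.range n, w (u j) (u (j+1)))
            + β * (∑ j ∈ Finset.range n, w (u (j+1)) (u (j+2)))
          ≤ α * w s T + β * w s T := by
            gcongr
        _ = w s T := by rw [← add_mul, hαβ, one_mul]
    obtain ⟨k, hk, hkle⟩ := Finset.exists_le_of_sum_le ⟨0, by simp [hn]⟩ havg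
    rw [Finset.mem_range] at hk
    set a : ℝ := w (u k) (u (k+1)) with hadef
    set b : ℝ := w (u (k+1)) (u (k+2)) with hbdef
    have ha : 0 ≤ a := hfnn k (by omega)
    have hb : 0 ≤ b := hfnn (k+1) (by omega)
    have hab : a ^ α * b ^ β ≤ w s T / n :=
      le_trans (Real.geom_mean_le_arith_mean2_weighted hα.le hβ.le ha hb hαβ) hkle
    have key : a ^ (1/p) * b ^ (1/q) ≤ (w s T / n) ^ (1/p + 1/q) := by
      have e1 : a ^ (1/p) = (a ^ α) ^ (1/p + 1/q) := by
        rw [← Real.rpow_mul ha, hαdef, div_mul_cancel₀ _ (ne_of_gt hθ0)]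
      have e2 : b ^ (1/q) = (b ^ β) ^ (1/p + 1/q) := by
        rw [← Real.rpow_mul hb, hβdef, div_mul_cancel₀ _ (ne_of_gt hθ0)]
      rw [e1, e2, ← Real.mul_rpow (Real.rpow_nonneg ha α) (Real.rpow_nonneg hb β)]
      exact Real.rpow_le_rpow (by positivity) hab hθ0.le
    -- the partition with the point `u (k+1)` removed
    set ρ : ℕ → ℕ := fun j => if j < k + 1 then j else j + 1 with hρdef
    have hρmono : ∀ i j : ℕ, i ≤ j → ρ i ≤ ρ j := by
      intro i j hij; simp only [hρdef]; split_ifs <;> omega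
    have hρle : ∀ j : ℕ, j ≤ n → ρ j ≤ n + 1 := by
      intro j hj; simp only [hρdef]; split_ifs <;> omega
    set u' : ℕ → ℝ := fun j => u (ρ j) with hu'def
    have ih := IH u'
      (fun i j hij hj => hmono _ _ (hρmono i j hij) (hρle j hj))
      (by simp [hu'def, hρdef, h0])
      (by
        have : ρ n = n + 1 := by simp only [hρdef]; split_ifs <;> omega
        simp [hu'def, this, hm])
      (fun i j kk l h1 h2 h3 h4 =>
        hΦ _ _ _ _ (hρmono i j h1) (hρle j h2) (hρmono kk l h3) (hρle l h4))
    -- the removed rectangular increment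
    set D : ℝ := Φ (u (k+1)) (u (k+2)) - Φ (u k) (u (k+2))
        - Φ (u (k+1)) (u (k+1)) + Φ (u k) (u (k+1)) with hDdef
    have hD : |D| ≤ C * a ^ (1/p) * b ^ (1/q) :=
      hΦ k (k+1) (k+1) (k+2) (by omega) (by omega) (by omega) (by omega)
    -- the sum over the original partition splits as sum over the new one plus D
    have hsplit : ∑ j ∈ Finset.range (n+1),
          (Φ (u j) (u (j+1)) - Φ s (u (j+1)) - Φ (u j) (u j) + Φ s (u j))
        = (∑ j ∈ Finset.range n,
            (Φ (u' j) (u' (j+1)) - Φ s (u' (j+1)) - Φ (u' j) (u' j) + Φ s (u' j)))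
          + D := by
      obtain ⟨r, hr⟩ : ∃ r, n = (k + 1) + r := ⟨n - (k+1), by omega⟩
      have e1 : n + 1 = k + 2 + r := by omega
      rw [e1, hr]
      have main := sum_point_removal
        (fun j => Φ (u j) (u (j+1)) - Φ s (u (j+1)) - Φ (u j) (u j) + Φ s (u j))
        (fun j => Φ (u' j) (u' (j+1)) - Φ s (u' (j+1)) - Φ (u' j) (u' j) + Φ s (u' j))
        k r
        (by
          intro j hj
          have r1 : ρ j = j := by simp only [hρdef]; split_ifs <;> omega
          have r2 : ρ (j+1) = j+1 := by simp only [hρdef]; split_ifs <;> omega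
          simp [hu'def, r1, r2])
        (by
          intro j hj
          have r1 : ρ (k+1+j) = k+2+j := by simp only [hρdef]; split_ifs <;> omega
          have r2 : ρ (k+1+j+1) = k+2+j+1 := by simp only [hρdef]; split_ifs <;> omega
          simp [hu'def, r1, r2])
      rw [main]
      have r1 : ρ k = k := by simp only [hρdef]; split_ifs <;> omega
      have r2 : ρ (k+1) = k+2 := by simp only [hρdef]; split_ifs <;> omega
      simp only [hu'def, r1, r2, hDdef]
      ring
    -- put everything together
    rw [hsplit]
    have step1 : |(∑ j ∈ Finset.range n,
          (Φ (u' j) (u' (j+1)) - Φ s (u' (j+1)) - Φ (u' j) (u' j) + Φ s (u' j))) + D|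
        ≤ C * (∑ kk ∈ Finset.range (n-1), ((kk:ℝ)+1) ^ (-(1/p+1/q)))
            * (w s T) ^ (1/p+1/q) + C * (w s T / n) ^ (1/p + 1/q) := by
      refine le_trans (abs_add_le _ _) (add_le_add ih ?_)
      calc |D| ≤ C * a ^ (1/p) * b ^ (1/q) := hD
        _ = C * (a ^ (1/p) * b ^ (1/q)) := by ring
        _ ≤ C * (w s T / n) ^ (1/p + 1/q) := mul_le_mul_of_nonneg_left key hC
    refine le_trans step1 ?_
    -- final arithmetic: partial zeta sums
    have hdiv : (w s T / n) ^ (1/p + 1/q)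
        = ((n:ℝ)) ^ (-(1/p+1/q)) * (w s T) ^ (1/p+1/q) := by
      rw [Real.div_rpow hW (Nat.cast_nonneg n),
        Real.rpow_neg (Nat.cast_nonneg n), div_eq_inv_mul]
    have hsum_succ : ∑ kk ∈ Finset.range ((n+1)-1), ((kk:ℝ)+1) ^ (-(1/p+1/q))
        = (∑ kk ∈ Finset.range (n-1), ((kk:ℝ)+1) ^ (-(1/p+1/q)))
          + ((n:ℝ)) ^ (-(1/p+1/q)) := by
      have e : (n+1)-1 = (n-1)+1 := by omega
      have hcast : (((n-1):ℕ):ℝ) + 1 = (n:ℝ) := by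
        have : (n-1)+1 = n := by omega
        exact_mod_cast congrArg (Nat.cast : ℕ → ℝ) this
      rw [e, Finset.sum_range_succ, hcast]
    rw [hdiv, hsum_succ]
    exact le_of_eq (by ring)

/-- Young-type maximal inequality (one-dimensional case): if `w` is a control
function on `[s,T]`, `θ = 1/p + 1/q > 1`, and the rectangular increments of
`Φ` satisfy `|Φ([u,u']×[v,v'])| ≤ C w(u,u')^{1/p} w(v,v')^{1/q}` on the points
of a partition `s = t_0 < … < t_m = T`, then
`|∑_{i=1}^m Φ([s,t_{i-1}]×[t_{i-1},t_i])| ≤ C ζ(θ) w(s,T)^θ`. -/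
theorem young_maximal_inequality (p q C : ℝ) (hp : 0 < p) (hq : 0 < q)
    (hθ : 1 < 1/p + 1/q) (hC : 0 ≤ C)
    (s T : ℝ) (hsT : s ≤ T) (w : ℝ → ℝ → ℝ) (Φ : ℝ → ℝ → ℝ)
    (hw0 : ∀ a b : ℝ, s ≤ a → a ≤ b → b ≤ T → 0 ≤ w a b)
    (hwsuper : ∀ a b c : ℝ, s ≤ a → a ≤ b → b ≤ c → c ≤ T →
      w a b + w b c ≤ w a c)
    (m : ℕ) (t : Fin (m+1) → ℝ) (hmono : Monotone t)
    (ht0 : t 0 = s) (htm : t (Fin.last m) = T)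
    (hΦ : ∀ i j k l : Fin (m+1), i ≤ j → k ≤ l →
      |Φ (t j) (t l) - Φ (t i) (t l) - Φ (t j) (t k) + Φ (t i) (t k)|
        ≤ C * (w (t i) (t j)) ^ (1/p) * (w (t k) (t l)) ^ (1/q)) :
    |∑ i : Fin m,
        (Φ (t i.castSucc) (t i.succ) - Φ s (t i.succ)
          - Φ (t i.castSucc) (t i.castSucc) + Φ s (t i.castSucc))|
      ≤ C * (∑' n : ℕ, ((n : ℝ) + 1) ^ (-(1/p + 1/q))) * (w s T) ^ (1/p + 1/q) := by
  -- ℕ-indexed version of the partition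
  set u : ℕ → ℝ := fun i => t ⟨min i m, Nat.lt_succ_of_le (Nat.min_le_right i m)⟩
    with hudef
  have hu : ∀ i : ℕ, ∀ h : i ≤ m, u i = t ⟨i, Nat.lt_succ_of_le h⟩ := by
    intro i h
    simp only [hudef]
    congr 1
    exact Fin.ext (by simpa using Nat.min_eq_left h)
  have humono : ∀ i j : ℕ, i ≤ j → j ≤ m → u i ≤ u j := by
    intro i j hij hj
    exact hmono (by simp only [Fin.mk_le_mk]; omega)
  have hu0 : u 0 = s := by
    rw [hu 0 (Nat.zero_le m), ← ht0]
    congr 1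
  have hum : u m = T := by
    rw [hu m le_rfl, ← htm]
    rfl
  have huΦ : ∀ i j k l : ℕ, i ≤ j → j ≤ m → k ≤ l → l ≤ m →
      |Φ (u j) (u l) - Φ (u i) (u l) - Φ (u j) (u k) + Φ (u i) (u k)|
        ≤ C * (w (u i) (u j)) ^ (1/p) * (w (u k) (u l)) ^ (1/q) := by
    intro i j k l h1 h2 h3 h4
    rw [hu i (h1.trans h2), hu j h2, hu k (h3.trans h4), hu l h4]
    exact hΦ _ _ _ _ (by simpa [Fin.le_def]) (by simpa [Fin.le_def])
  -- rewrite the Fin sum as a range sum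
  have hsum : ∑ i : Fin m,
        (Φ (t i.castSucc) (t i.succ) - Φ s (t i.succ)
          - Φ (t i.castSucc) (t i.castSucc) + Φ s (t i.castSucc))
      = ∑ j ∈ Finset.range m,
        (Φ (u j) (u (j+1)) - Φ s (u (j+1)) - Φ (u j) (u j) + Φ s (u j)) := by
    rw [← Fin.sum_univ_eq_sum_range]
    refine Finset.sum_congr rfl fun i _ => ?_
    have e1 : u (i : ℕ) = t i.castSucc := by
      rw [hu i (le_of_lt i.isLt)]
      congr 1
    have e2 : u ((i : ℕ) + 1) = t i.succ := by
      rw [hu ((i:ℕ)+1) i.isLt]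
      congr 1
    rw [e1, e2]
  rw [hsum]
  -- apply the ℕ-indexed lemma and compare partial sums with the series
  have haux := young_aux p q C hp hq hθ hC s T w Φ hw0 hwsuper m u humono hu0 hum huΦ
  refine le_trans haux ?_
  have hθ0 : (0:ℝ) < 1/p + 1/q := by positivity
  have hsummable : Summable (fun n : ℕ => ((n:ℝ) + 1) ^ (-(1/p + 1/q))) := by
    have h1 : Summable (fun n : ℕ => ((n:ℝ)) ^ (-(1/p+1/q))) :=
      Real.summable_nat_rpow.mpr (by linarith)
    have h2 := (summable_nat_add_iff 1).mpr h1
    refine h2.congr fun n => ?_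
    push_cast
    rfl
  have hle : ∑ k ∈ Finset.range (m-1), ((k:ℝ)+1) ^ (-(1/p+1/q))
      ≤ ∑' n : ℕ, ((n:ℝ) + 1) ^ (-(1/p + 1/q)) :=
    Summable.sum_le_tsum _ (fun i _ => Real.rpow_nonneg (by positivity) _) hsummable
  have hW : 0 ≤ w s T := hw0 s T le_rfl hsT le_rfl
  have hWθ : 0 ≤ (w s T) ^ (1/p + 1/q) := Real.rpow_nonneg hW _
  calc C * (∑ k ∈ Finset.range (m-1), ((k:ℝ)+1) ^ (-(1/p+1/q))) * (w s T) ^ (1/p+1/q)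
      ≤ C * (∑' n : ℕ, ((n:ℝ) + 1) ^ (-(1/p + 1/q))) * (w s T) ^ (1/p+1/q) := by
        gcongr
    _ = C * (∑' n : ℕ, ((n:ℝ) + 1) ^ (-(1/p + 1/q))) * (w s T) ^ (1/p + 1/q) := rfl
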